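/- Let 0 < α < 1, q > 0, k ≥ 1 an integer, and let f : [0,1] → ℝ be continuous. Suppose u : [0,1] × [0,q] → ℝ is continuous, u(·,t) is twice continuously differentiable in x on [0,1] for each t ∈ (0,q), ∂u/∂t exists and is continuous on [0,1] × (0,q) with (x,z) ↦ ∂u/∂t(x,z)(t-z)^{-α} integrable on [0,1] × (0,t) for each t ∈ (0,q), u(0,t) = u(1,t) for all t, and (1/Γ(1-α)) ∫₀ᵗ u_t(x,z)(t-z)^{-α} dz − u_xx(x,t) = f(x) for all (x,t) ∈ (0,1) × (0,q). Then V(t) = 4∫₀¹ u(x,t) sin(2kπx) dx satisfies the fractional ODE (D^α V)(t) + (2kπ)² V(t) = f₂ for t ∈ (0,q), where f₂ = 4∫₀¹ f(x) sin(2kπx) dx. -/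

import Mathlib

open MeasureTheory Real

lemma aux_ibp (c : ℝ) (hsc : Real.sin c = 0) (hcc : Real.cos c = 1)
    (g : ℝ → ℝ) (hg : ContDiffOn ℝ 2 g (Set.Icc 0 1)) (hbcg : g 0 = g 1) :
    IntegrableOn (fun x => deriv (deriv g) x * Real.sin (c * x)) (Set.Icc 0 1) ∧
    ∫ x in (0:ℝ)..1, deriv (deriv g) x * Real.sin (c * x)
      = -c ^ 2 * ∫ x in (0:ℝ)..1, g x * Real.sin (c * x) := by
  have hU : UniqueDiffOn ℝ (Set.Icc (0:ℝ) 1) := uniqueDiffOn_Icc one_pos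
  set g1 := derivWithin g (Set.Icc 0 1) with hg1def
  set g2 := derivWithin g1 (Set.Icc 0 1) with hg2def
  have hg1 : ContDiffOn ℝ 1 g1 (Set.Icc 0 1) := hg.derivWithin hU (by norm_num)
  have hg2c : ContinuousOn g2 (Set.Icc 0 1) :=
    hg1.continuousOn_derivWithin hU le_rfl
  have hg1c : ContinuousOn g1 (Set.Icc 0 1) := hg1.continuousOn
  have hgc : ContinuousOn g (Set.Icc 0 1) := hg.continuousOn
  have key1 : ∀ x ∈ Set.Ioo (0:ℝ) 1, HasDerivAt g (g1 x) x := by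
    intro x hx
    exact ((hg.differentiableOn (by norm_num) x
      (Set.Ioo_subset_Icc_self hx)).hasDerivWithinAt).hasDerivAt
      (Icc_mem_nhds hx.1 hx.2)
  have key2 : ∀ x ∈ Set.Ioo (0:ℝ) 1, HasDerivAt g1 (g2 x) x := by
    intro x hx
    exact ((hg1.differentiableOn (by norm_num) x
      (Set.Ioo_subset_Icc_self hx)).hasDerivWithinAt).hasDerivAt
      (Icc_mem_nhds hx.1 hx.2)
  have keyd : ∀ x ∈ Set.Ioo (0:ℝ) 1, deriv (deriv g) x = g2 x := by
    intro x hx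
    have h1 : deriv g =ᶠ[nhds x] g1 :=
      Filter.eventuallyEq_of_mem (isOpen_Ioo.mem_nhds hx) fun y hy => (key1 y hy).deriv
    rw [h1.deriv_eq, (key2 x hx).deriv]
  set h : ℝ → ℝ := fun x => g1 x * Real.sin (c * x) - c * (g x * Real.cos (c * x)) with hh
  set φ : ℝ → ℝ := fun x => g2 x * Real.sin (c * x) + c ^ 2 * (g x * Real.sin (c * x)) with hφ
  have hsin : ∀ x : ℝ, HasDerivAt (fun y => Real.sin (c * y)) (c * Real.cos (c * x)) x := by
    intro x
    have := (Real.hasDerivAt_sin (c * x)).comp x ((hasDerivAt_id x).const_mul c)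
    exact this.congr_deriv (by ring)
  have hcos : ∀ x : ℝ, HasDerivAt (fun y => Real.cos (c * y)) (-(c * Real.sin (c * x))) x := by
    intro x
    have := (Real.hasDerivAt_cos (c * x)).comp x ((hasDerivAt_id x).const_mul c)
    exact this.congr_deriv (by ring)
  have hderiv : ∀ x ∈ Set.Ioo (0:ℝ) 1, HasDerivAt h (φ x) x := by
    intro x hx
    have h1 := key1 x hx
    have h2 := key2 x hx
    have := ((h2.mul (hsin x)).sub (((h1.mul (hcos x))).const_mul c))
    exact this.congr_deriv (by simp only [hφ]; ring)
  have hconth : ContinuousOn h (Set.Icc 0 1) := by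
    apply ContinuousOn.sub
    · exact hg1c.mul (Real.continuous_sin.comp (continuous_const.mul continuous_id)).continuousOn
    · exact continuousOn_const.mul (hgc.mul
        (Real.continuous_cos.comp (continuous_const.mul continuous_id)).continuousOn)
  have hcontφ : ContinuousOn φ (Set.Icc 0 1) := by
    apply ContinuousOn.add
    · exact hg2c.mul (Real.continuous_sin.comp (continuous_const.mul continuous_id)).continuousOn
    · exact continuousOn_const.mul (hgc.mul
        (Real.continuous_sin.comp (continuous_const.mul continuous_id)).continuousOn)
  have hintφ : IntervalIntegrable φ volume 0 1 := by
    apply ContinuousOn.intervalIntegrable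
    rwa [Set.uIcc_of_le (zero_le_one)]
  have hFTC := intervalIntegral.integral_eq_sub_of_hasDerivAt_of_le zero_le_one hconth hderiv hintφ
  have hval : h 1 - h 0 = 0 := by
    simp [hh, hsc, hcc, hbcg]
  rw [hval] at hFTC
  -- split ∫ φ
  have hi1 : IntervalIntegrable (fun x => g2 x * Real.sin (c * x)) volume 0 1 := by
    apply ContinuousOn.intervalIntegrable
    rw [Set.uIcc_of_le (zero_le_one)]
    exact hg2c.mul (Real.continuous_sin.comp (continuous_const.mul continuous_id)).continuousOn
  have hi2 : IntervalIntegrable (fun x => c ^ 2 * (g x * Real.sin (c * x))) volume 0 1 := by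
    apply ContinuousOn.intervalIntegrable
    rw [Set.uIcc_of_le (zero_le_one)]
    exact continuousOn_const.mul (hgc.mul
      (Real.continuous_sin.comp (continuous_const.mul continuous_id)).continuousOn)
  have hsplit : (∫ x in (0:ℝ)..1, φ x)
      = (∫ x in (0:ℝ)..1, g2 x * Real.sin (c * x))
        + c ^ 2 * ∫ x in (0:ℝ)..1, g x * Real.sin (c * x) := by
    rw [hφ]
    rw [intervalIntegral.integral_add hi1 hi2, intervalIntegral.integral_const_mul]
  have hcongr : (∫ x in (0:ℝ)..1, deriv (deriv g) x * Real.sin (c * x))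
      = ∫ x in (0:ℝ)..1, g2 x * Real.sin (c * x) := by
    apply intervalIntegral.integral_congr_ae
    have hne : ∀ᵐ (x : ℝ), x ∉ ({1} : Set ℝ) :=
      measure_eq_zero_iff_ae_notMem.mp (measure_singleton 1)
    filter_upwards [hne] with x hx hmem
    rw [Set.uIoc_of_le zero_le_one] at hmem
    have : x ∈ Set.Ioo (0:ℝ) 1 := ⟨hmem.1, lt_of_le_of_ne hmem.2 (by simpa using hx)⟩
    rw [keyd x this]
  -- integrability of the second-derivative integrand
  have hae : (fun x => deriv (deriv g) x * Real.sin (c * x))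
      =ᵐ[volume.restrict (Set.Icc (0:ℝ) 1)] fun x => g2 x * Real.sin (c * x) := by
    rw [Filter.EventuallyEq, ae_restrict_iff' measurableSet_Icc]
    have hne : ∀ᵐ (x : ℝ), x ∉ ({0, 1} : Set ℝ) :=
      measure_eq_zero_iff_ae_notMem.mp ((Set.toFinite ({0,1} : Set ℝ)).measure_zero volume)
    filter_upwards [hne] with x hx hxI
    have hxo : x ∈ Set.Ioo (0:ℝ) 1 := by
      simp only [Set.mem_insert_iff, Set.mem_singleton_iff, not_or] at hx
      exact ⟨lt_of_le_of_ne hxI.1 (Ne.symm hx.1), lt_of_le_of_ne hxI.2 hx.2⟩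
    rw [keyd x hxo]
  have hii : IntegrableOn (fun x => g2 x * Real.sin (c * x)) (Set.Icc 0 1) :=
    (hg2c.mul (Real.continuous_sin.comp
      (continuous_const.mul continuous_id)).continuousOn).integrableOn_compact isCompact_Icc
  refine ⟨hii.congr hae.symm, ?_⟩
  rw [hcongr]
  have := hsplit.symm.trans hFTC
  linarith

lemma aux_dV (q c : ℝ) (u ut : ℝ → ℝ → ℝ)
    (hu_cont : ContinuousOn (fun pt : ℝ × ℝ => u pt.1 pt.2) (Set.Icc 0 1 ×ˢ Set.Icc 0 q))
    (hut : ∀ x ∈ Set.Icc (0:ℝ) 1, ∀ t ∈ Set.Ioo (0:ℝ) q, HasDerivAt (fun τ => u x τ) (ut x t) t)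
    (hut_cont : ContinuousOn (fun pt : ℝ × ℝ => ut pt.1 pt.2) (Set.Icc 0 1 ×ˢ Set.Ioo 0 q))
    (z : ℝ) (hz : z ∈ Set.Ioo 0 q) :
    HasDerivAt (fun τ => 4 * ∫ x in (0:ℝ)..1, u x τ * Real.sin (c * x))
      (4 * ∫ x in (0:ℝ)..1, ut x z * Real.sin (c * x)) z := by
  obtain ⟨hz0, hzq⟩ := hz
  set ε := min z (q - z) / 2 with hε
  have hε0 : 0 < ε := by
    apply div_pos _ two_pos
    exact lt_min hz0 (by linarith)
  have hεz : ε < z := by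
    have : min z (q - z) ≤ z := min_le_left _ _
    linarith
  have hεq : z + ε < q := by
    have : min z (q - z) ≤ q - z := min_le_right _ _
    linarith
  have hsub : Set.Icc (z - ε) (z + ε) ⊆ Set.Ioo 0 q := by
    intro y hy
    exact ⟨by linarith [hy.1], by linarith [hy.2]⟩
  -- bound for ut on the compact rectangle
  have hK : IsCompact (Set.Icc (0:ℝ) 1 ×ˢ Set.Icc (z - ε) (z + ε)) :=
    isCompact_Icc.prod isCompact_Icc
  have hcontK : ContinuousOn (fun pt : ℝ × ℝ => ut pt.1 pt.2)
      (Set.Icc (0:ℝ) 1 ×ˢ Set.Icc (z - ε) (z + ε)) :=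
    hut_cont.mono (Set.prod_mono_right hsub)
  obtain ⟨M, hM⟩ := hK.exists_bound_of_continuousOn hcontK
  -- measurability facts
  have hmeas : ∀ τ ∈ Set.Icc (0:ℝ) q, AEStronglyMeasurable
      (fun x => u x τ * Real.sin (c * x)) (volume.restrict (Set.uIoc (0:ℝ) 1)) := by
    intro τ hτ
    have hcont : ContinuousOn (fun x => u x τ * Real.sin (c * x)) (Set.Icc 0 1) := by
      apply ContinuousOn.mul
      · exact hu_cont.comp (Continuous.continuousOn (by fun_prop))
          (fun x hx => Set.mk_mem_prod hx hτ)
      · exact (Real.continuous_sin.comp (by fun_prop)).continuousOn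
    rw [Set.uIoc_of_le zero_le_one]
    exact (hcont.mono Set.Ioc_subset_Icc_self).aestronglyMeasurable measurableSet_Ioc
  have hmeas' : AEStronglyMeasurable
      (fun x => ut x z * Real.sin (c * x)) (volume.restrict (Set.uIoc (0:ℝ) 1)) := by
    have hcont : ContinuousOn (fun x => ut x z * Real.sin (c * x)) (Set.Icc 0 1) := by
      apply ContinuousOn.mul
      · exact hut_cont.comp (Continuous.continuousOn (by fun_prop))
          (fun x hx => Set.mk_mem_prod hx ⟨hz0, hzq⟩)
      · exact (Real.continuous_sin.comp (by fun_prop)).continuousOn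
    rw [Set.uIoc_of_le zero_le_one]
    exact (hcont.mono Set.Ioc_subset_Icc_self).aestronglyMeasurable measurableSet_Ioc
  have main := intervalIntegral.hasDerivAt_integral_of_dominated_loc_of_deriv_le
    (F := fun τ x => u x τ * Real.sin (c * x))
    (F' := fun τ x => ut x τ * Real.sin (c * x))
    (a := 0) (b := 1) (x₀ := z) (bound := fun _ => |M|) (μ := volume)
    (Metric.ball_mem_nhds z hε0) ?_ ?_ hmeas' ?_ ?_ ?_
  · exact main.2.const_mul 4
  · -- eventually measurable
    have : Set.Ioo (0:ℝ) q ∈ nhds z := isOpen_Ioo.mem_nhds ⟨hz0, hzq⟩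
    filter_upwards [this] with τ hτ
    exact hmeas τ (Set.mem_Icc_of_Ioo hτ)
  · -- interval integrability at z
    apply ContinuousOn.intervalIntegrable
    rw [Set.uIcc_of_le zero_le_one]
    apply ContinuousOn.mul
    · exact hu_cont.comp (Continuous.continuousOn (by fun_prop))
        (fun x hx => Set.mk_mem_prod hx (Set.mem_Icc_of_Ioo ⟨hz0, hzq⟩))
    · exact (Real.continuous_sin.comp (by fun_prop)).continuousOn
  · -- bound
    apply Filter.Eventually.of_forall
    intro x hx τ hτ
    rw [Set.uIoc_of_le zero_le_one] at hx
    have hxI : x ∈ Set.Icc (0:ℝ) 1 := Set.Ioc_subset_Icc_self hx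
    have hτI : τ ∈ Set.Icc (z - ε) (z + ε) := by
      rw [Metric.mem_ball, Real.dist_eq, abs_lt] at hτ
      exact ⟨by linarith [hτ.1], by linarith [hτ.2]⟩
    have hb := hM (x, τ) (Set.mk_mem_prod hxI hτI)
    calc ‖ut x τ * Real.sin (c * x)‖ = |ut x τ| * |Real.sin (c * x)| := abs_mul _ _
      _ ≤ |ut x τ| * 1 := by
          exact mul_le_mul_of_nonneg_left (Real.abs_sin_le_one _) (abs_nonneg _)
      _ ≤ |M| := by
          rw [mul_one]
          exact le_trans (by simpa [Real.norm_eq_abs] using hb) (le_abs_self M)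
  · exact intervalIntegrable_const
  · -- differentiability
    apply Filter.Eventually.of_forall
    intro x hx τ hτ
    rw [Set.uIoc_of_le zero_le_one] at hx
    have hτI : τ ∈ Set.Ioo 0 q := by
      rw [Metric.mem_ball, Real.dist_eq, abs_lt] at hτ
      exact hsub ⟨by linarith [hτ.1], by linarith [hτ.2]⟩
    exact (hut x (Set.Ioc_subset_Icc_self hx) τ hτI).mul_const _

lemma aux_fubini (t α c : ℝ) (ut : ℝ → ℝ → ℝ)
    (hint : IntegrableOn (fun pt : ℝ × ℝ => ut pt.1 pt.2 * (t - pt.2) ^ (-α))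
      (Set.Icc 0 1 ×ˢ Set.Ioo 0 t)) :
    ∫ z in Set.Ioo (0:ℝ) t, (∫ x in Set.Icc (0:ℝ) 1, ut x z * Real.sin (c * x)) * (t - z) ^ (-α)
      = ∫ x in Set.Icc (0:ℝ) 1,
          (∫ z in Set.Ioo (0:ℝ) t, ut x z * (t - z) ^ (-α)) * Real.sin (c * x) := by
  have hH : Integrable (fun p : ℝ × ℝ => Real.sin (c * p.1) * (ut p.1 p.2 * (t - p.2) ^ (-α)))
      ((volume.restrict (Set.Icc (0:ℝ) 1)).prod (volume.restrict (Set.Ioo (0:ℝ) t))) := by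
    rw [Measure.prod_restrict, ← Measure.volume_eq_prod]
    exact hint.bdd_mul (c := 1)
      ((Real.continuous_sin.comp (by fun_prop : Continuous fun p : ℝ × ℝ => c * p.1)).aestronglyMeasurable)
      (Filter.Eventually.of_forall fun p => by simpa [Real.norm_eq_abs] using Real.abs_sin_le_one _)
  have swap := MeasureTheory.integral_integral_swap
    (f := fun x z => Real.sin (c * x) * (ut x z * (t - z) ^ (-α))) hH
  -- massage LHS of swap
  have hL : (∫ x in Set.Icc (0:ℝ) 1, ∫ z in Set.Ioo (0:ℝ) t,
        Real.sin (c * x) * (ut x z * (t - z) ^ (-α)))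
      = ∫ x in Set.Icc (0:ℝ) 1,
          (∫ z in Set.Ioo (0:ℝ) t, ut x z * (t - z) ^ (-α)) * Real.sin (c * x) := by
    apply integral_congr_ae (Filter.Eventually.of_forall fun x => ?_)
    rw [MeasureTheory.integral_const_mul, mul_comm]
  -- massage RHS of swap
  have hR : (∫ z in Set.Ioo (0:ℝ) t, ∫ x in Set.Icc (0:ℝ) 1,
        Real.sin (c * x) * (ut x z * (t - z) ^ (-α)))
      = ∫ z in Set.Ioo (0:ℝ) t,
          (∫ x in Set.Icc (0:ℝ) 1, ut x z * Real.sin (c * x)) * (t - z) ^ (-α) := by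
    apply integral_congr_ae (Filter.Eventually.of_forall fun z => ?_)
    rw [show (fun x => Real.sin (c * x) * (ut x z * (t - z) ^ (-α)))
        = fun x => (t - z) ^ (-α) * (ut x z * Real.sin (c * x)) from funext fun x => by ring]
    rw [MeasureTheory.integral_const_mul, mul_comm]
  rw [hL] at swap
  rw [hR] at swap
  exact swap.symm

/-- If `u` solves the time-fractional diffusion equation
`(D^α u)(x,t) - u_xx(x,t) = f(x)` on `(0,1) × (0,q)` with `u(0,t) = u(1,t)`, then the mode
`V(t) = 4∫₀¹ u(x,t) sin(2kπx) dx` satisfies the fractional ODE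
`(D^α V)(t) + (2kπ)² V(t) = f₂`, where `f₂ = 4∫₀¹ f(x) sin(2kπx) dx`. -/
theorem sine_mode_fractional_ode (α q : ℝ) (hα0 : 0 < α) (hα1 : α < 1) (hq : 0 < q)
    (k : ℕ) (hk : 1 ≤ k)
    (f : ℝ → ℝ) (hf : ContinuousOn f (Set.Icc 0 1))
    (u ut : ℝ → ℝ → ℝ)
    (hu_cont : ContinuousOn (fun pt : ℝ × ℝ => u pt.1 pt.2) (Set.Icc 0 1 ×ˢ Set.Icc 0 q))
    (hu_xx : ∀ t ∈ Set.Ioo (0:ℝ) q, ContDiffOn ℝ 2 (fun x => u x t) (Set.Icc 0 1))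
    (hut : ∀ x ∈ Set.Icc (0:ℝ) 1, ∀ t ∈ Set.Ioo (0:ℝ) q, HasDerivAt (fun τ => u x τ) (ut x t) t)
    (hut_cont : ContinuousOn (fun pt : ℝ × ℝ => ut pt.1 pt.2) (Set.Icc 0 1 ×ˢ Set.Ioo 0 q))
    (hint : ∀ t ∈ Set.Ioo (0:ℝ) q,
      IntegrableOn (fun pt : ℝ × ℝ => ut pt.1 pt.2 * (t - pt.2) ^ (-α))
        (Set.Icc 0 1 ×ˢ Set.Ioo 0 t))
    (hbc : ∀ t ∈ Set.Icc (0:ℝ) q, u 0 t = u 1 t)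
    (hpde : ∀ x ∈ Set.Ioo (0:ℝ) 1, ∀ t ∈ Set.Ioo (0:ℝ) q,
      (1 / Real.Gamma (1 - α)) * (∫ z in (0:ℝ)..t, ut x z * (t - z) ^ (-α))
        - deriv (deriv (fun ξ => u ξ t)) x = f x) :
    ∀ t ∈ Set.Ioo (0:ℝ) q,
      (1 / Real.Gamma (1 - α)) *
          (∫ z in (0:ℝ)..t,
            deriv (fun τ => 4 * ∫ x in (0:ℝ)..1, u x τ * Real.sin (2 * k * π * x)) z
              * (t - z) ^ (-α))
        + (2 * k * π) ^ 2 * (4 * ∫ x in (0:ℝ)..1, u x t * Real.sin (2 * k * π * x))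
      = 4 * ∫ x in (0:ℝ)..1, f x * Real.sin (2 * k * π * x) := by
  intro t ht
  obtain ⟨ht0, htq⟩ := ht
  set c : ℝ := 2 * (k:ℝ) * π with hcdef
  have hsc : Real.sin c = 0 := by
    rw [hcdef, show 2 * (k:ℝ) * π = ((2 * k : ℕ) : ℝ) * π by push_cast; ring]
    exact Real.sin_nat_mul_pi _
  have hcc : Real.cos c = 1 := by
    rw [hcdef, show 2 * (k:ℝ) * π = ((k : ℕ) : ℝ) * (2 * π) by push_cast; ring]
    exact Real.cos_nat_mul_two_pi _
  have htIoo : t ∈ Set.Ioo (0:ℝ) q := ⟨ht0, htq⟩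
  have hg : ContDiffOn ℝ 2 (fun ξ => u ξ t) (Set.Icc 0 1) := hu_xx t htIoo
  have hbcg : u 0 t = u 1 t := hbc t (Set.mem_Icc_of_Ioo htIoo)
  obtain ⟨hDDint, hibp⟩ := aux_ibp c hsc hcc (fun ξ => u ξ t) hg hbcg
  -- conversion between interval and set integrals on [0,1]
  have hIcc : ∀ (h : ℝ → ℝ), ∫ x in (0:ℝ)..1, h x = ∫ x in Set.Icc (0:ℝ) 1, h x := by
    intro h
    rw [intervalIntegral.integral_of_le zero_le_one, ← integral_Icc_eq_integral_Ioc]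
  -- derivative of the mode
  have hdV : ∀ z ∈ Set.Ioo (0:ℝ) t,
      deriv (fun τ => 4 * ∫ x in (0:ℝ)..1, u x τ * Real.sin (c * x)) z
        = 4 * ∫ x in Set.Icc (0:ℝ) 1, ut x z * Real.sin (c * x) := by
    intro z hz
    rw [(aux_dV q c u ut hu_cont hut hut_cont z ⟨hz.1, hz.2.trans htq⟩).deriv]
    rw [hIcc]
  -- Step 1: rewrite the fractional integral of deriv V
  have hterm1 : (∫ z in (0:ℝ)..t,
        deriv (fun τ => 4 * ∫ x in (0:ℝ)..1, u x τ * Real.sin (c * x)) z * (t - z) ^ (-α))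
      = 4 * ∫ z in Set.Ioo (0:ℝ) t,
          (∫ x in Set.Icc (0:ℝ) 1, ut x z * Real.sin (c * x)) * (t - z) ^ (-α) := by
    rw [intervalIntegral.integral_of_le ht0.le, integral_Ioc_eq_integral_Ioo,
      ← MeasureTheory.integral_const_mul]
    apply integral_congr_ae
    rw [Filter.EventuallyEq, ae_restrict_iff' measurableSet_Ioo]
    apply Filter.Eventually.of_forall
    intro z hz
    rw [hdV z hz]
    ring
  -- Step 2: Fubini
  have hfub := aux_fubini t α c ut (hint t htIoo)
  -- Step 3: use the PDE pointwise
  have hpde' : ∀ x ∈ Set.Ioo (0:ℝ) 1,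
      (1 / Real.Gamma (1 - α)) * ((∫ z in Set.Ioo (0:ℝ) t, ut x z * (t - z) ^ (-α))
          * Real.sin (c * x))
        = f x * Real.sin (c * x) + deriv (deriv (fun ξ => u ξ t)) x * Real.sin (c * x) := by
    intro x hx
    have h := hpde x hx t htIoo
    rw [intervalIntegral.integral_of_le ht0.le, integral_Ioc_eq_integral_Ioo] at h
    linear_combination h * Real.sin (c * x)
  have hfint : IntegrableOn (fun x => f x * Real.sin (c * x)) (Set.Icc (0:ℝ) 1) :=
    ((hf.mul (Real.continuous_sin.comp
      (continuous_const.mul continuous_id)).continuousOn)).integrableOn_compact isCompact_Icc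
  have hkey : ∫ x in Set.Icc (0:ℝ) 1, (1 / Real.Gamma (1 - α)) *
        ((∫ z in Set.Ioo (0:ℝ) t, ut x z * (t - z) ^ (-α)) * Real.sin (c * x))
      = (∫ x in Set.Icc (0:ℝ) 1, f x * Real.sin (c * x))
        + ∫ x in Set.Icc (0:ℝ) 1, deriv (deriv (fun ξ => u ξ t)) x * Real.sin (c * x) := by
    rw [← integral_add hfint hDDint]
    apply integral_congr_ae
    rw [Filter.EventuallyEq, ae_restrict_iff' measurableSet_Icc]
    have hne : ∀ᵐ (x : ℝ), x ∉ ({0, 1} : Set ℝ) :=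
      measure_eq_zero_iff_ae_notMem.mp ((Set.toFinite ({0,1} : Set ℝ)).measure_zero volume)
    filter_upwards [hne] with x hx hxI
    have hxo : x ∈ Set.Ioo (0:ℝ) 1 := by
      simp only [Set.mem_insert_iff, Set.mem_singleton_iff, not_or] at hx
      exact ⟨lt_of_le_of_ne hxI.1 (Ne.symm hx.1), lt_of_le_of_ne hxI.2 hx.2⟩
    exact hpde' x hxo
  -- put everything together
  rw [hterm1]
  rw [hfub]
  rw [show (1 / Real.Gamma (1 - α)) * (4 * ∫ x in Set.Icc (0:ℝ) 1,
        (∫ z in Set.Ioo (0:ℝ) t, ut x z * (t - z) ^ (-α)) * Real.sin (c * x))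
      = 4 * ((1 / Real.Gamma (1 - α)) * ∫ x in Set.Icc (0:ℝ) 1,
        (∫ z in Set.Ioo (0:ℝ) t, ut x z * (t - z) ^ (-α)) * Real.sin (c * x)) by ring]
  rw [← MeasureTheory.integral_const_mul (1 / Real.Gamma (1 - α))]
  rw [hkey]
  rw [← hIcc fun x => f x * Real.sin (c * x), ← hIcc fun x =>
    deriv (deriv (fun ξ => u ξ t)) x * Real.sin (c * x)]
  rw [hibp]
  ring
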